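/- arXiv:1803.01669 — 3 statements merged into one kernel-verified Lean document; each statement's English description precedes it below -/
import Mathlib

section
/- Let u_x, u_y, u_xx, u_xy, u_yy be real numbers and set J = u_y² u_xx − 2 u_x u_y u_xy + u_x² u_yy, assumed nonzero. Define β = (u_y u_xy − u_x u_yy)/J and α = (u_y u_xx − u_x u_xy)/J. Then β² u_xx − 2αβ u_xy + α² u_yy = (u_xx u_yy − u_xy²)/J, i.e., the invariantization of u_ww equals H/J where H = u_xx u_yy − u_xy². -/
/-- with `β = (u_y u_xy − u_x u_yy)/J` and `α = (u_y u_xx − u_x u_xy)/J`,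
where `J = u_y² u_xx − 2 u_x u_y u_xy + u_x² u_yy ≠ 0`, the invariantization of
`u_ww` equals `H/J` with `H = u_xx u_yy − u_xy²`. -/
theorem invariantization_uww (ux uy uxx uxy uyy J H α β : ℝ)
    (hJ : J = uy ^ 2 * uxx - 2 * ux * uy * uxy + ux ^ 2 * uyy) (hJ0 : J ≠ 0)
    (hH : H = uxx * uyy - uxy ^ 2)
    (hβ : β = (uy * uxy - ux * uyy) / J)
    (hα : α = (uy * uxx - ux * uxy) / J) :
    β ^ 2 * uxx - 2 * α * β * uxy + α ^ 2 * uyy = H / J := by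
  have key : (uy * uxy - ux * uyy) ^ 2 * uxx
      - 2 * (uy * uxx - ux * uxy) * (uy * uxy - ux * uyy) * uxy
      + (uy * uxx - ux * uxy) ^ 2 * uyy = H * J := by
    rw [hH, hJ]; ring
  subst hβ hα
  field_simp
  linear_combination key
end

section
/- Let u: ℝ² → ℝ be twice continuously differentiable, let A be a 2×2 real matrix with det A = 1, let b ∈ ℝ², and let T(x) = A x + b. If v: ℝ² → ℝ is twice continuously differentiable and satisfies v(T(x)) = u(x) for all x, then the differential invariant J is equi-affine invariant: v_z² v_ww − 2 v_z v_w v_zw + v_w² v_zz evaluated at T(x) equals u_x² u_yy − 2 u_x u_y u_xy + u_y² u_xx evaluated at x, for every x ∈ ℝ². -/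
open Matrix

noncomputable def pdx (f : ℝ × ℝ → ℝ) (p : ℝ × ℝ) : ℝ := fderiv ℝ f p (1, 0)
noncomputable def pdy (f : ℝ × ℝ → ℝ) (p : ℝ × ℝ) : ℝ := fderiv ℝ f p (0, 1)
noncomputable def pdxx (f : ℝ × ℝ → ℝ) : ℝ × ℝ → ℝ := pdx (pdx f)
noncomputable def pdxy (f : ℝ × ℝ → ℝ) : ℝ × ℝ → ℝ := pdy (pdx f)
noncomputable def pdyy (f : ℝ × ℝ → ℝ) : ℝ × ℝ → ℝ := pdy (pdy f)

/-- The second-order differential invariant `J[u] = u_x² u_yy − 2 u_x u_y u_xy + u_y² u_xx`. -/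
noncomputable def Jinv (f : ℝ × ℝ → ℝ) (p : ℝ × ℝ) : ℝ :=
  (pdx f p) ^ 2 * pdyy f p - 2 * pdx f p * pdy f p * pdxy f p + (pdy f p) ^ 2 * pdxx f p

lemma pd_comb (f : ℝ × ℝ → ℝ) (q : ℝ × ℝ) (s t : ℝ) :
    fderiv ℝ f q (s, t) = s * pdx f q + t * pdy f q := by
  have h : (s, t) = s • ((1:ℝ), (0:ℝ)) + t • ((0:ℝ), (1:ℝ)) := by
    simp [Prod.ext_iff]
  rw [h, map_add, _root_.map_smul, _root_.map_smul]
  simp [pdx, pdy, smul_eq_mul]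

/-- symmetry of second derivative -/
lemma pd_symm (f : ℝ × ℝ → ℝ) (hf : ContDiff ℝ 2 f) (q : ℝ × ℝ) :
    pdx (pdy f) q = pdxy f q := by
  have hdiff : Differentiable ℝ f := hf.differentiable (by norm_num)
  have hf' : ContDiff ℝ 1 (fderiv ℝ f) := hf.fderiv_right (by norm_num)
  have hf'd : DifferentiableAt ℝ (fderiv ℝ f) q := (hf'.differentiable (by norm_num)) q
  have hsymm := second_derivative_symmetric (f := f) (f' := fderiv ℝ f)
    (f'' := fderiv ℝ (fderiv ℝ f) q) (x := q)
    (fun y => (hdiff y).hasFDerivAt) hf'd.hasFDerivAt (1, 0) (0, 1)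
  have e1 : ∀ w : ℝ × ℝ, fderiv ℝ (fun x => fderiv ℝ f x w) q =
      (fderiv ℝ (fderiv ℝ f) q).flip w := by
    intro w
    rw [fderiv_clm_apply hf'd (differentiableAt_const w)]
    simp
  show fderiv ℝ (fun x => fderiv ℝ f x (0,1)) q (1,0)
      = fderiv ℝ (fun x => fderiv ℝ f x (1,0)) q (0,1)
  rw [e1, e1]
  simpa using hsymm

/-- `J` is an equi-affine differential invariant: if `v ∘ T = u` for an
equi-affine map `T x = A x + b` with `det A = 1`, then `J[v](T x) = J[u](x)`. -/
theorem J_equiaffine_invariant (A : Matrix (Fin 2) (Fin 2) ℝ) (hA : A.det = 1)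
    (b₁ b₂ : ℝ) (u v : ℝ × ℝ → ℝ) (hu : ContDiff ℝ 2 u) (hv : ContDiff ℝ 2 v)
    (T : ℝ × ℝ → ℝ × ℝ)
    (hT : ∀ p : ℝ × ℝ, T p = (A 0 0 * p.1 + A 0 1 * p.2 + b₁, A 1 0 * p.1 + A 1 1 * p.2 + b₂))
    (huv : ∀ p : ℝ × ℝ, v (T p) = u p) :
    ∀ p : ℝ × ℝ, Jinv v (T p) = Jinv u p := by
  set a := A 0 0 with ha
  set b := A 0 1 with hb
  set c := A 1 0 with hc
  set d := A 1 1 with hd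
  have hdet : a * d - b * c = 1 := by
    rw [Matrix.det_fin_two] at hA; exact hA
  -- the linear part
  set L : (ℝ × ℝ) →L[ℝ] (ℝ × ℝ) :=
    ((a • ContinuousLinearMap.fst ℝ ℝ ℝ + b • ContinuousLinearMap.snd ℝ ℝ ℝ).prod
     (c • ContinuousLinearMap.fst ℝ ℝ ℝ + d • ContinuousLinearMap.snd ℝ ℝ ℝ)) with hL
  have hLval : ∀ p : ℝ × ℝ, L p = (a * p.1 + b * p.2, c * p.1 + d * p.2) := by
    intro p; simp [hL, ContinuousLinearMap.prod_apply, smul_eq_mul]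
  have hTL : ∀ q : ℝ × ℝ, HasFDerivAt T L q := by
    intro q
    have hTe : T = fun p => L p + (b₁, b₂) := by
      funext p; rw [hT p, hLval p]; simp [Prod.ext_iff]
    rw [hTe]
    exact (L.hasFDerivAt).add_const _
  have hTdiff : Differentiable ℝ T := fun q => (hTL q).differentiableAt
  -- chain rule for first partials
  have keyx : ∀ (f : ℝ × ℝ → ℝ), Differentiable ℝ f → ∀ q,
      pdx (fun p => f (T p)) q = a * pdx f (T q) + c * pdy f (T q) := by
    intro f hf q
    have hcomp : fderiv ℝ (fun p => f (T p)) q = (fderiv ℝ f (T q)).comp L := by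
      exact (((hf (T q)).hasFDerivAt).comp q (hTL q)).fderiv
    show fderiv ℝ (fun p => f (T p)) q (1, 0) = _
    rw [hcomp]
    simp only [ContinuousLinearMap.comp_apply]
    rw [show L (1, 0) = (a, c) by rw [hLval]; simp]
    exact pd_comb f (T q) a c
  have keyy : ∀ (f : ℝ × ℝ → ℝ), Differentiable ℝ f → ∀ q,
      pdy (fun p => f (T p)) q = b * pdx f (T q) + d * pdy f (T q) := by
    intro f hf q
    have hcomp : fderiv ℝ (fun p => f (T p)) q = (fderiv ℝ f (T q)).comp L := by
      exact (((hf (T q)).hasFDerivAt).comp q (hTL q)).fderiv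
    show fderiv ℝ (fun p => f (T p)) q (0, 1) = _
    rw [hcomp]
    simp only [ContinuousLinearMap.comp_apply]
    rw [show L (0, 1) = (b, d) by rw [hLval]; simp]
    exact pd_comb f (T q) b d
  -- regularity facts
  have hvdiff : Differentiable ℝ v := hv.differentiable (by norm_num)
  have hVx : ContDiff ℝ 1 (pdx v) := by
    have := (hv.fderiv_right (m := 1) (by norm_num)).clm_apply (contDiff_const (c := ((1:ℝ),(0:ℝ))))
    exact this
  have hVy : ContDiff ℝ 1 (pdy v) := by
    have := (hv.fderiv_right (m := 1) (by norm_num)).clm_apply (contDiff_const (c := ((0:ℝ),(1:ℝ))))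
    exact this
  have hVxd : Differentiable ℝ (pdx v) := hVx.differentiable (by norm_num)
  have hVyd : Differentiable ℝ (pdy v) := hVy.differentiable (by norm_num)
  have hue : u = fun p => v (T p) := funext fun p => (huv p).symm
  -- first partials of u
  have hux : ∀ q, pdx u q = a * pdx v (T q) + c * pdy v (T q) := by
    intro q; rw [hue]; exact keyx v hvdiff q
  have huy : ∀ q, pdy u q = b * pdx v (T q) + d * pdy v (T q) := by
    intro q; rw [hue]; exact keyy v hvdiff q
  -- functions
  have huxe : pdx u = fun q => a * pdx v (T q) + c * pdy v (T q) := funext hux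
  have huye : pdy u = fun q => b * pdx v (T q) + d * pdy v (T q) := funext huy
  -- derivative of linear combinations
  have combx : ∀ (s t : ℝ) q, pdx (fun p => s * pdx v (T p) + t * pdy v (T p)) q
      = s * pdx (fun p => pdx v (T p)) q + t * pdx (fun p => pdy v (T p)) q := by
    intro s t q
    have h1 : DifferentiableAt ℝ (fun p => pdx v (T p)) q :=
      (hVxd (T q)).comp q (hTdiff q)
    have h2 : DifferentiableAt ℝ (fun p => pdy v (T p)) q :=
      (hVyd (T q)).comp q (hTdiff q)
    show fderiv ℝ _ q (1,0) = _
    rw [fderiv_fun_add (h1.const_mul s) (h2.const_mul t), fderiv_const_mul h1,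
      fderiv_const_mul h2]
    simp [pdx]
  have comby : ∀ (s t : ℝ) q, pdy (fun p => s * pdx v (T p) + t * pdy v (T p)) q
      = s * pdy (fun p => pdx v (T p)) q + t * pdy (fun p => pdy v (T p)) q := by
    intro s t q
    have h1 : DifferentiableAt ℝ (fun p => pdx v (T p)) q :=
      (hVxd (T q)).comp q (hTdiff q)
    have h2 : DifferentiableAt ℝ (fun p => pdy v (T p)) q :=
      (hVyd (T q)).comp q (hTdiff q)
    show fderiv ℝ _ q (0,1) = _
    rw [fderiv_fun_add (h1.const_mul s) (h2.const_mul t), fderiv_const_mul h1,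
      fderiv_const_mul h2]
    simp [pdy]
  have hsym : ∀ q, pdx (pdy v) q = pdxy v q := fun q => pd_symm v hv q
  intro p
  -- second partials of u at p
  have huxx : pdxx u p = a * (a * pdxx v (T p) + c * pdxy v (T p))
      + c * (a * pdxy v (T p) + c * pdyy v (T p)) := by
    show pdx (pdx u) p = _
    rw [huxe, combx]
    rw [keyx (pdx v) hVxd p, keyx (pdy v) hVyd p, hsym (T p)]
    rfl
  have huxy : pdxy u p = a * (b * pdxx v (T p) + d * pdxy v (T p))
      + c * (b * pdxy v (T p) + d * pdyy v (T p)) := by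
    show pdy (pdx u) p = _
    rw [huxe, comby]
    rw [keyy (pdx v) hVxd p, keyy (pdy v) hVyd p, hsym (T p)]
    rfl
  have huyy : pdyy u p = b * (b * pdxx v (T p) + d * pdxy v (T p))
      + d * (b * pdxy v (T p) + d * pdyy v (T p)) := by
    show pdy (pdy u) p = _
    rw [huye, comby]
    rw [keyy (pdx v) hVxd p, keyy (pdy v) hVyd p, hsym (T p)]
    rfl
  simp only [Jinv, hux p, huy p, huxx, huxy, huyy]
  set X := pdx v (T p)
  set Y := pdy v (T p)
  set XX := pdxx v (T p)
  set XY := pdxy v (T p)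
  set YY := pdyy v (T p)
  linear_combination (-(a*d - b*c + 1) * (X^2*YY - 2*X*Y*XY + Y^2*XX)) * hdet
end

section
/- Let u: ℝ³ → ℝ be twice continuously differentiable, let A be an invertible 3×3 real matrix, b ∈ ℝ³, and T(x) = A x + b. If v: ℝ³ → ℝ is twice continuously differentiable with v(T(x)) = u(x) for all x, and the Hessian ∇²u(x) is invertible at a point x, then ∇v(T(x))ᵀ (∇²v(T(x)))⁻¹ ∇v(T(x)) = ∇u(x)ᵀ (∇²u(x))⁻¹ ∇u(x); that is, the quantity ∇uᵀ(∇²u)⁻¹∇u is an affine differential invariant of 3D images. -/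
open Matrix

/-- The gradient of `f : ℝ³ → ℝ` at `x`. -/
noncomputable def grad (f : (Fin 3 → ℝ) → ℝ) (x : Fin 3 → ℝ) : Fin 3 → ℝ :=
  fun i => fderiv ℝ f x (Pi.single i 1)

/-- The Hessian matrix of `f : ℝ³ → ℝ` at `x`. -/
noncomputable def hess (f : (Fin 3 → ℝ) → ℝ) (x : Fin 3 → ℝ) :
    Matrix (Fin 3) (Fin 3) ℝ :=
  fun i j => fderiv ℝ (fun y => fderiv ℝ f y (Pi.single j 1)) x (Pi.single i 1)

/-- Decompose a vector in `Fin 3 → ℝ` in the standard basis. -/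
lemma vec_eq_sum_single (c : Fin 3 → ℝ) :
    c = ∑ k, c k • (Pi.single k 1 : Fin 3 → ℝ) := by
  conv_lhs => rw [← Finset.univ_sum_single c]
  refine Finset.sum_congr rfl fun k _ => ?_
  ext j
  by_cases h : j = k
  · subst h; simp
  · simp [Pi.single_apply, h, Ne.symm h]

/-- A continuous linear map applied to a vector, expanded in the basis. -/
lemma clm_expand {M : Type*} [NormedAddCommGroup M] [NormedSpace ℝ M]
    (f : (Fin 3 → ℝ) →L[ℝ] M) (c : Fin 3 → ℝ) :
    f c = ∑ k, c k • f (Pi.single k 1) := by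
  conv_lhs => rw [vec_eq_sum_single c]
  rw [map_sum]
  simp

/-- the quantity `∇uᵀ (∇²u)⁻¹ ∇u` is an affine differential invariant of
3D images: if `v ∘ T = u` for `T x = A x + b` with `A` invertible, and `∇²u(x)` is
invertible, then `∇v(Tx)ᵀ (∇²v(Tx))⁻¹ ∇v(Tx) = ∇u(x)ᵀ (∇²u(x))⁻¹ ∇u(x)`. -/
theorem gradient_hessian_quadratic_form_invariant_3d
    (u v : (Fin 3 → ℝ) → ℝ) (hu : ContDiff ℝ 2 u) (hv : ContDiff ℝ 2 v)
    (A : Matrix (Fin 3) (Fin 3) ℝ) (hA : IsUnit A.det) (b : Fin 3 → ℝ)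
    (T : (Fin 3 → ℝ) → (Fin 3 → ℝ)) (hT : ∀ x, T x = A.mulVec x + b)
    (huv : ∀ x, v (T x) = u x)
    (x : Fin 3 → ℝ) (hHess : IsUnit (hess u x).det) :
    grad v (T x) ⬝ᵥ (hess v (T x))⁻¹.mulVec (grad v (T x)) =
      grad u x ⬝ᵥ (hess u x)⁻¹.mulVec (grad u x) := by
  classical
  -- The linear part of T as a continuous linear map
  set L : (Fin 3 → ℝ) →L[ℝ] (Fin 3 → ℝ) :=
    LinearMap.toContinuousLinearMap (Matrix.mulVecLin A) with hL
  have hLapp : ∀ c, L c = A.mulVec c := fun c => rfl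
  have hTderiv : ∀ y, HasFDerivAt T L y := by
    intro y
    have : T = fun z => L z + b := by
      funext z; rw [hT z]; rfl
    rw [this]
    exact L.hasFDerivAt.add_const b
  have hueq : u = v ∘ T := by funext z; exact (huv z).symm
  have hvdiff : Differentiable ℝ v := hv.differentiable (by norm_num)
  -- chain rule for first derivative
  have hfd : ∀ y, fderiv ℝ u y = (fderiv ℝ v (T y)).comp L := by
    intro y
    rw [hueq]
    exact (((hvdiff (T y)).hasFDerivAt).comp y (hTderiv y)).fderiv
  -- D := derivative of v, differentiable since v is C²
  set D : (Fin 3 → ℝ) → ((Fin 3 → ℝ) →L[ℝ] ℝ) := fderiv ℝ v with hD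
  have hDdiff : Differentiable ℝ D := by
    have : ContDiff ℝ 1 D := hv.fderiv_right (by norm_num)
    exact this.differentiable (by norm_num)
  set B : (Fin 3 → ℝ) →L[ℝ] ((Fin 3 → ℝ) →L[ℝ] ℝ) := fderiv ℝ D (T x) with hB
  have hDfd : HasFDerivAt D B (T x) := (hDdiff (T x)).hasFDerivAt
  -- hess v (T x) in terms of B
  have hhv : ∀ k l, hess v (T x) k l = B (Pi.single k 1) (Pi.single l 1) := by
    intro k l
    have h1 : (fun y => fderiv ℝ v y (Pi.single l 1)) =
        (ContinuousLinearMap.apply ℝ ℝ (Pi.single l 1 : Fin 3 → ℝ)) ∘ D := rfl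
    have h2 : HasFDerivAt ((ContinuousLinearMap.apply ℝ ℝ (Pi.single l 1 : Fin 3 → ℝ)) ∘ D)
        ((ContinuousLinearMap.apply ℝ ℝ (Pi.single l 1 : Fin 3 → ℝ)).comp B) (T x) :=
      (ContinuousLinearMap.apply ℝ ℝ (Pi.single l 1 : Fin 3 → ℝ)).hasFDerivAt.comp (T x) hDfd
    show fderiv ℝ (fun y => fderiv ℝ v y (Pi.single l 1)) (T x) (Pi.single k 1) = _
    rw [h1, h2.fderiv]
    rfl
  -- hess u x in terms of B
  have hhu : ∀ i j, hess u x i j = B (L (Pi.single i 1)) (L (Pi.single j 1)) := by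
    intro i j
    have h1 : (fun y => fderiv ℝ u y (Pi.single j 1)) =
        (ContinuousLinearMap.apply ℝ ℝ (L (Pi.single j 1))) ∘ (D ∘ T) := by
      funext y
      simp only [Function.comp_apply, hfd y]
      rfl
    have h2 : HasFDerivAt ((ContinuousLinearMap.apply ℝ ℝ (L (Pi.single j 1))) ∘ (D ∘ T))
        ((ContinuousLinearMap.apply ℝ ℝ (L (Pi.single j 1))).comp (B.comp L)) x :=
      (ContinuousLinearMap.apply ℝ ℝ (L (Pi.single j 1))).hasFDerivAt.comp x
        (hDfd.comp x (hTderiv x))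
    show fderiv ℝ (fun y => fderiv ℝ u y (Pi.single j 1)) x (Pi.single i 1) = _
    rw [h1, h2.fderiv]
    rfl
  -- grad u in terms of grad v
  set g : Fin 3 → ℝ := grad v (T x) with hg
  have hgrad : grad u x = Aᵀ.mulVec g := by
    funext i
    show fderiv ℝ u x (Pi.single i 1) = _
    rw [hfd x]
    have : (fderiv ℝ v (T x)).comp L (Pi.single i 1) =
        fderiv ℝ v (T x) (L (Pi.single i 1)) := rfl
    rw [this, clm_expand (fderiv ℝ v (T x)) (L (Pi.single i 1))]
    simp only [hLapp, Matrix.mulVec_single, mul_one]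
    rw [Matrix.mulVec]
    simp [dotProduct, Matrix.transpose_apply, smul_eq_mul, hg, grad]
  -- hess u = Aᵀ * H * A
  set H : Matrix (Fin 3) (Fin 3) ℝ := hess v (T x) with hH
  have hhess : hess u x = Aᵀ * H * A := by
    funext i j
    rw [hhu i j]
    have hLi : L (Pi.single i 1) = ∑ k, A k i • (Pi.single k 1 : Fin 3 → ℝ) := by
      rw [hLapp, Matrix.mulVec_single]
      simp only [MulOpposite.op_one, one_smul]
      exact vec_eq_sum_single _
    have hLj : L (Pi.single j 1) = ∑ l, A l j • (Pi.single l 1 : Fin 3 → ℝ) := by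
      rw [hLapp, Matrix.mulVec_single]
      simp only [MulOpposite.op_one, one_smul]
      exact vec_eq_sum_single _
    rw [hLi, hLj]
    have key : B (∑ k, A k i • (Pi.single k 1 : Fin 3 → ℝ))
        (∑ l, A l j • (Pi.single l 1 : Fin 3 → ℝ)) =
        ∑ l, ∑ k, A k i * A l j * B (Pi.single k 1) (Pi.single l 1) := by
      simp only [map_sum, _root_.map_smul, ContinuousLinearMap.sum_apply,
        ContinuousLinearMap.smul_apply, smul_eq_mul, Finset.mul_sum]
      refine Finset.sum_congr rfl fun l _ => Finset.sum_congr rfl fun k _ => by ring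
    rw [key]
    simp only [Matrix.mul_apply, Matrix.transpose_apply, Finset.sum_mul]
    refine Finset.sum_congr rfl fun l _ => Finset.sum_congr rfl fun k _ => ?_
    rw [← hhv k l]
    ring
  -- invertibility of H
  have hdetA : IsUnit Aᵀ.det := by rwa [Matrix.det_transpose]
  have hdetH : IsUnit H.det := by
    rw [hhess, Matrix.det_mul, Matrix.det_mul, Matrix.det_transpose] at hHess
    rw [isUnit_iff_ne_zero] at hHess hA ⊢
    intro h
    apply hHess
    rw [h]; ring
  -- final algebra
  rw [hgrad, hhess, Matrix.mul_inv_rev, Matrix.mul_inv_rev, Matrix.mulVec_mulVec]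
  have e1 : A⁻¹ * (H⁻¹ * Aᵀ⁻¹) * Aᵀ = A⁻¹ * H⁻¹ := by
    rw [mul_assoc, mul_assoc, Matrix.nonsing_inv_mul Aᵀ hdetA, mul_one]
  rw [e1, Matrix.mulVec_transpose, dotProduct_mulVec, dotProduct_mulVec,
    Matrix.vecMul_vecMul]
  have e2 : A * (A⁻¹ * H⁻¹) = H⁻¹ := by
    rw [← mul_assoc, Matrix.mul_nonsing_inv A hA, one_mul]
  rw [e2]
end
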